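/- Let R be a von Neumann regular unital ring and M, N finitely presented left R-modules. Then M ≼_M N (Malcolmson subequivalence of modules) if and only if M is isomorphic to a quotient module of N. -/

import Mathlib

/-- One step of the Malcolmson relation on modules: `M ≲ N` iff `N` decomposes as `N₁ ⊕ N₂`
with an exact sequence `N₁ → M → N₂ → 0`. -/
def ModStep {R : Type} [Ring R] (M N : ModuleCat.{0} R) : Prop :=
  ∃ (N₁ N₂ : Submodule R N), IsCompl N₁ N₂ ∧
    ∃ (f : N₁ →ₗ[R] M) (g : M →ₗ[R] N₂),
      Function.Surjective g ∧ LinearMap.range f = LinearMap.ker g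

/-- Malcolmson subequivalence of finitely presented modules: a finite chain of `ModStep`s
through finitely presented modules. -/
def ModMsub {R : Type} [Ring R] (M N : ModuleCat.{0} R) : Prop :=
  Relation.ReflTransGen
    (fun (X Y : ModuleCat.{0} R) => Module.FinitePresentation R X ∧ Module.FinitePresentation R Y ∧ ModStep X Y) M N

section aux

variable {R : Type} [Ring R]

/-- Key ring computation over a von Neumann regular ring: given `x₁,…,xₘ`, there are
coefficients `cᵢ` with `(∑ xᵢ cᵢ) * xⱼ = xⱼ` for all `j`. -/
lemma vnr_exists_coeffs (hreg : ∀ a : R, ∃ b : R, a * b * a = a) :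
    ∀ (m : ℕ) (x : Fin m → R), ∃ c : Fin m → R, ∀ j, (∑ i, x i * c i) * x j = x j := by
  intro m
  induction m with
  | zero => intro x; exact ⟨0, fun j => j.elim0⟩
  | succ m ih =>
    intro x
    obtain ⟨b, hb⟩ := hreg (x 0)
    set e : R := x 0 * b with he
    have he0 : e * x 0 = x 0 := hb
    obtain ⟨c', hc'⟩ := ih (fun i => x i.succ - e * x i.succ)
    set T : R := ∑ i : Fin m, x i.succ * c' i with hT
    set cc : Fin (m+1) → R := Fin.cons (b - b * (T * (1 - e))) (fun i => c' i * (1 - e))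
      with hcc
    refine ⟨cc, ?_⟩
    have hsum : (∑ j, x j * cc j)
        = e + (∑ i, (x i.succ - e * x i.succ) * c' i) * (1 - e) := by
      rw [Fin.sum_univ_succ]
      simp only [hcc, Fin.cons_zero, Fin.cons_succ]
      have h1 : ∑ i : Fin m, x i.succ * (c' i * (1 - e)) = T * (1 - e) := by
        rw [hT, Finset.sum_mul]
        exact Finset.sum_congr rfl fun i _ => (mul_assoc _ _ _).symm
      have h2 : ∑ i : Fin m, (x i.succ - e * x i.succ) * c' i = T - e * T := by
        rw [hT, Finset.mul_sum, ← Finset.sum_sub_distrib]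
        exact Finset.sum_congr rfl fun i _ => by rw [sub_mul, mul_assoc]
      rw [h1, h2, he]
      noncomm_ring
    intro j
    rw [hsum]
    set f' : R := ∑ i, (x i.succ - e * x i.succ) * c' i with hf'
    induction j using Fin.cases with
    | zero =>
      have : (1 - e) * x 0 = 0 := by rw [sub_mul, one_mul, he0, sub_self]
      rw [add_mul, mul_assoc f' (1 - e) (x 0), this, mul_zero, add_zero]
      exact he0
    | succ i =>
      have h3 : (1 - e) * x i.succ = x i.succ - e * x i.succ := by
        rw [sub_mul, one_mul]
      rw [add_mul, mul_assoc f' (1 - e) (x i.succ), h3, hc' i]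
      abel

/-- Over a von Neumann regular ring, a cyclic submodule of `Rⁿ` is the image of an
idempotent endomorphism. -/
lemma vnr_cyclic_proj (hreg : ∀ a : R, ∃ b : R, a * b * a = a) (n : ℕ) (x : Fin n → R) :
    ∃ p : (Fin n → R) →ₗ[R] (Fin n → R), p ∘ₗ p = p ∧
      LinearMap.range p = Submodule.span R {x} := by
  obtain ⟨c, hc⟩ := vnr_exists_coeffs hreg n x
  set lam : (Fin n → R) →ₗ[R] R :=
    ∑ i, (LinearMap.proj i).smulRight (c i) with hlam
  have hlamapp : ∀ v, lam v = ∑ i, v i * c i := by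
    intro v
    rw [hlam, LinearMap.sum_apply]
    exact Finset.sum_congr rfl fun i _ => by
      rw [LinearMap.smulRight_apply, LinearMap.proj_apply, smul_eq_mul]
  set p : (Fin n → R) →ₗ[R] (Fin n → R) := lam.smulRight x with hp
  have happ : ∀ v, p v = lam v • x := fun v => rfl
  have hpx : p x = x := by
    rw [happ]
    funext j
    show lam x * x j = x j
    rw [hlamapp]
    exact hc j
  have hidem : p ∘ₗ p = p := by
    apply LinearMap.ext
    intro v
    show p (p v) = p v
    rw [happ v, map_smul, hpx]
  refine ⟨p, hidem, le_antisymm ?_ ?_⟩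
  · rintro _ ⟨v, rfl⟩
    rw [happ]
    exact Submodule.smul_mem _ _ (Submodule.mem_span_singleton_self x)
  · rw [Submodule.span_singleton_le_iff_mem]
    exact ⟨x, hpx⟩

/-- Over a von Neumann regular ring, every finitely generated submodule of `Rⁿ` is the image
of an idempotent endomorphism. -/
lemma vnr_fg_proj (hreg : ∀ a : R, ∃ b : R, a * b * a = a) (n : ℕ)
    (K : Submodule R (Fin n → R)) (hK : K.FG) :
    ∃ p : (Fin n → R) →ₗ[R] (Fin n → R), p ∘ₗ p = p ∧ LinearMap.range p = K := by
  classical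
  obtain ⟨S, rfl⟩ := hK
  induction S using Finset.induction_on with
  | empty => exact ⟨0, by ext v; simp, by simp⟩
  | @insert x S hx ihS =>
    obtain ⟨p₀, hp₀i, hp₀r⟩ := ihS
    have hp₀ : ∀ v, p₀ (p₀ v) = p₀ v := fun v => congrFun (congrArg DFunLike.coe hp₀i) v
    set x' : Fin n → R := x - p₀ x with hx'
    obtain ⟨p₁, hp₁i, hp₁r⟩ := vnr_cyclic_proj hreg n x'
    have hp₁ : ∀ v, p₁ (p₁ v) = p₁ v := fun v => congrFun (congrArg DFunLike.coe hp₁i) v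
    have hx'ker : p₀ x' = 0 := by rw [hx', map_sub, hp₀, sub_self]
    have h01 : ∀ v, p₀ (p₁ v) = 0 := by
      intro v
      have : p₁ v ∈ Submodule.span R {x'} := hp₁r ▸ LinearMap.mem_range_self p₁ v
      obtain ⟨a, ha⟩ := Submodule.mem_span_singleton.mp this
      rw [← ha, map_smul, hx'ker, smul_zero]
    have hp₁x' : p₁ x' = x' := by
      have : x' ∈ LinearMap.range p₁ := by
        rw [hp₁r]; exact Submodule.mem_span_singleton_self x'
      obtain ⟨w, hw⟩ := this
      rw [← hw, hp₁]
    set P : (Fin n → R) →ₗ[R] (Fin n → R) := p₀ + p₁ ∘ₗ (LinearMap.id - p₀) with hP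
    have hPapp : ∀ v, P v = p₀ v + p₁ (v - p₀ v) := fun v => rfl
    have hPidem : P ∘ₗ P = P := by
      apply LinearMap.ext
      intro v
      show P (P v) = P v
      rw [hPapp (P v), hPapp v]
      have h1 : p₀ (p₀ v + p₁ (v - p₀ v)) = p₀ v := by
        rw [map_add, hp₀, h01, add_zero]
      rw [h1]
      have h2 : p₀ v + p₁ (v - p₀ v) - p₀ v = p₁ (v - p₀ v) := by abel
      rw [h2, hp₁]
    refine ⟨P, hPidem, ?_⟩
    rw [Finset.coe_insert, Submodule.span_insert]
    apply le_antisymm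
    · rintro _ ⟨v, rfl⟩
      rw [hPapp]
      apply Submodule.add_mem
      · exact Submodule.mem_sup_right (hp₀r ▸ LinearMap.mem_range_self p₀ v)
      · have hmem : p₁ (v - p₀ v) ∈ Submodule.span R {x'} :=
          hp₁r ▸ LinearMap.mem_range_self p₁ _
        obtain ⟨a, ha⟩ := Submodule.mem_span_singleton.mp hmem
        rw [← ha, hx', smul_sub]
        apply Submodule.sub_mem
        · exact Submodule.mem_sup_left (Submodule.smul_mem _ _
            (Submodule.mem_span_singleton_self x))
        · exact Submodule.mem_sup_right (Submodule.smul_mem _ _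
            (hp₀r ▸ LinearMap.mem_range_self p₀ x))
    · rw [sup_le_iff]
      constructor
      · rw [Submodule.span_singleton_le_iff_mem]
        have hfix : ∀ w, P (p₀ w) = p₀ w := by
          intro w
          rw [hPapp, hp₀]
          have : p₀ w - p₀ w = 0 := sub_self _
          rw [this, map_zero, add_zero]
        have hxx' : x' ∈ LinearMap.range P := by
          refine ⟨x', ?_⟩
          rw [hPapp, hx'ker, sub_zero, hp₁x', zero_add]
        have hpx : p₀ x ∈ LinearMap.range P := ⟨p₀ x, hfix x⟩
        have : x = x' + p₀ x := by rw [hx']; abel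
        rw [this]
        exact Submodule.add_mem _ hxx' hpx
      · rw [← hp₀r]
        rintro _ ⟨w, rfl⟩
        have hfix : P (p₀ w) = p₀ w := by
          rw [hPapp, hp₀]
          have : p₀ w - p₀ w = 0 := sub_self _
          rw [this, map_zero, add_zero]
        exact ⟨p₀ w, hfix⟩

/-- Over a von Neumann regular ring, every finitely presented module is projective. -/
lemma vnr_fp_projective (hreg : ∀ a : R, ∃ b : R, a * b * a = a)
    (X : Type) [AddCommGroup X] [Module R X] (hX : Module.FinitePresentation R X) :
    Module.Projective R X := by
  haveI := hX
  obtain ⟨n, π, hπ⟩ := Module.Finite.exists_fin' R X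
  have hker : (LinearMap.ker π).FG := Module.FinitePresentation.fg_ker π hπ
  obtain ⟨p, hpi, hpr⟩ := vnr_fg_proj hreg n _ hker
  have hp : ∀ v, p (p v) = p v := fun v => congrFun (congrArg DFunLike.coe hpi) v
  set q : (Fin n → R) →ₗ[R] (Fin n → R) := LinearMap.id - p with hq
  have hqapp : ∀ v, q v = v - p v := fun v => rfl
  have hπp : ∀ v, π (p v) = 0 := by
    intro v
    have : p v ∈ LinearMap.ker π := hpr ▸ LinearMap.mem_range_self p v
    exact this
  have hπq : ∀ v, π (q v) = π v := by
    intro v; rw [hqapp, map_sub, hπp, sub_zero]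
  have hpq : ∀ v, p (q v) = 0 := by
    intro v; rw [hqapp, map_sub, hp, sub_self]
  have hqq : ∀ v, q (q v) = q v := by
    intro v; rw [hqapp (q v), hpq, sub_zero]
  set l : LinearMap.range q →ₗ[R] X := π.comp (LinearMap.range q).subtype with hl
  have hinj : Function.Injective l := by
    rw [injective_iff_map_eq_zero]
    rintro ⟨u, w, rfl⟩ hu
    have h1 : π (q w) = 0 := hu
    have h2 : q w ∈ LinearMap.range p := by
      rw [hpr]; exact h1
    obtain ⟨z, hz⟩ := h2
    have h3 : q (q w) = 0 := by rw [← hz, hqapp (p z), hp, sub_self]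
    rw [hqq] at h3
    exact Subtype.ext h3
  have hsurj : Function.Surjective l := by
    intro x
    obtain ⟨v, hv⟩ := hπ x
    exact ⟨⟨q v, ⟨v, rfl⟩⟩, by show π (q v) = x; rw [hπq, hv]⟩
  set eqv : LinearMap.range q ≃ₗ[R] X := LinearEquiv.ofBijective l ⟨hinj, hsurj⟩ with heqv
  set i : X →ₗ[R] (Fin n → R) := (LinearMap.range q).subtype ∘ₗ eqv.symm.toLinearMap with hi
  have hsec : π.comp i = LinearMap.id := by
    apply LinearMap.ext
    intro x
    show π ((LinearMap.range q).subtype (eqv.symm x)) = x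
    exact eqv.apply_symm_apply x
  exact Module.Projective.of_split i π hsec

/-- A `ModStep` from `X` to `Y` yields a surjection `Y → X` (over a VNR ring, `X, Y` f.p.). -/
lemma vnr_step_surj (hreg : ∀ a : R, ∃ b : R, a * b * a = a) {X Y : ModuleCat.{0} R}
    (_hX : Module.FinitePresentation R X) (hY : Module.FinitePresentation R Y)
    (h : ModStep X Y) : ∃ φ : Y →ₗ[R] X, Function.Surjective φ := by
  obtain ⟨N₁, N₂, hc, f, g, hg, hfg⟩ := h
  haveI : Module.Projective R Y := vnr_fp_projective hreg Y hY
  set pr₂ : Y →ₗ[R] N₂ := Submodule.projectionOnto N₂ N₁ hc.symm with hpr₂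
  have hretr : pr₂.comp N₂.subtype = LinearMap.id := by
    apply LinearMap.ext
    intro u
    exact Submodule.projectionOnto_apply_left hc.symm u
  haveI : Module.Projective R N₂ := Module.Projective.of_split N₂.subtype pr₂ hretr
  obtain ⟨s, hs⟩ := Module.projective_lifting_property g LinearMap.id hg
  set pr₁ : Y →ₗ[R] N₁ := Submodule.projectionOnto N₁ N₂ hc with hpr₁
  refine ⟨f ∘ₗ pr₁ + s ∘ₗ pr₂, ?_⟩
  intro m
  have hkerm : m - s (g m) ∈ LinearMap.ker g := by
    have hsg : g (s (g m)) = g m := congrFun (congrArg DFunLike.coe hs) (g m)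
    rw [LinearMap.mem_ker, map_sub, hsg, sub_self]
  rw [← hfg] at hkerm
  obtain ⟨a, ha⟩ := hkerm
  refine ⟨(a : Y) + ((g m : N₂) : Y), ?_⟩
  show f (pr₁ ((a : Y) + ((g m : N₂) : Y))) + s (pr₂ ((a : Y) + ((g m : N₂) : Y))) = m
  have h1 : pr₁ ((a : Y) + ((g m : N₂) : Y)) = a := by
    rw [map_add, Submodule.projectionOnto_apply_left hc a,
        Submodule.projectionOnto_apply_right hc (g m), add_zero]
  have h2 : pr₂ ((a : Y) + ((g m : N₂) : Y)) = g m := by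
    rw [map_add, Submodule.projectionOnto_apply_right hc.symm a,
        Submodule.projectionOnto_apply_left hc.symm (g m), zero_add]
  rw [h1, h2, ha]
  abel

end aux

/-- Lemma: let `R` be a von Neumann regular unital ring and `M, N` finitely presented left
`R`-modules.  Then `M ≼_M N` if and only if `M` is isomorphic to a quotient module of `N`. -/
theorem stmt_18 {R : Type} [Ring R] (hreg : ∀ a : R, ∃ b : R, a * b * a = a)
    (M N : ModuleCat.{0} R)
    (hM : Module.FinitePresentation R M) (hN : Module.FinitePresentation R N) :
    ModMsub M N ↔ ∃ K : Submodule R N, Nonempty ((N ⧸ K) ≃ₗ[R] M) := by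
  constructor
  · intro h
    clear hN
    have key : ∃ φ : N →ₗ[R] M, Function.Surjective φ := by
      induction h with
      | refl => exact ⟨LinearMap.id, fun m => ⟨m, rfl⟩⟩
      | tail hab hbc ih =>
        obtain ⟨φ, hφ⟩ := ih
        obtain ⟨hb, hcfp, hstep⟩ := hbc
        obtain ⟨ψ, hψ⟩ := vnr_step_surj hreg hb hcfp hstep
        exact ⟨φ ∘ₗ ψ, hφ.comp hψ⟩
    obtain ⟨φ, hφ⟩ := key
    exact ⟨LinearMap.ker φ, ⟨φ.quotKerEquivOfSurjective hφ⟩⟩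
  · rintro ⟨K, ⟨e⟩⟩
    refine Relation.ReflTransGen.single ⟨hM, hN, ?_⟩
    refine ⟨⊤, ⊥, isCompl_top_bot,
      e.toLinearMap ∘ₗ K.mkQ ∘ₗ (⊤ : Submodule R N).subtype, 0, ?_, ?_⟩
    · intro z
      exact ⟨0, Subsingleton.elim _ _⟩
    · rw [LinearMap.ker_zero, LinearMap.range_eq_top]
      have h1 : Function.Surjective ⇑((⊤ : Submodule R N).subtype) :=
        fun y => ⟨⟨y, trivial⟩, rfl⟩
      have h2 : Function.Surjective ⇑(K.mkQ ∘ₗ (⊤ : Submodule R N).subtype) :=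
        (K.mkQ_surjective).comp h1
      exact e.surjective.comp h2
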